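/- Let Φ be the conjunctive network with firing memory associated to a connected finite simple (non-directed) graph G and maximum delays dt, and let y be a configuration in which every node whose Boolean state is 0 has delay 0. If there exist two adjacent nodes of G whose Boolean states in y are both 0, then the dynamics converges to the all-zero fixed point: there exists T ≥ 0 such that for all t ≥ T, every node of Φ^t(y) is in the pair state (0, 0). -/
import Mathlib

open Classical in
/-- The conjunctive network on a finite simple graph `G`:
`F(x)_i = ⋀_{j adjacent to i} x_j`. -/
noncomputable def conjNet {V : Type*} [Fintype V] (G : SimpleGraph V)
    (x : V → Bool) : V → Bool :=
  fun i => if ∀ j, G.Adj i j → x j = true then true else false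

/-- One step of the conjunctive network with firing memory on `G` with
maximum delays `dt`.  A configuration assigns to each node a pair
`(xᵢ, Δᵢ)` of a Boolean state and a delay. -/
noncomputable def fmStep {V : Type*} [Fintype V] (G : SimpleGraph V) (dt : V → ℕ)
    (y : V → Bool × ℕ) : V → Bool × ℕ :=
  fun i =>
    let f := conjNet G (fun j => (y j).1) i
    let d : ℕ := if f = true then dt i else (y i).2 - 1
    (if 1 ≤ d then true else f, d)

open Classical in
lemma fmStep_of_false_neighbor {n : ℕ} (G : SimpleGraph (Fin n)) (dt : Fin n → ℕ)
    (x : Fin n → Bool × ℕ) {v w : Fin n}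
    (h : G.Adj v w) (hw : (x w).1 = false) :
    fmStep G dt x v = (if 1 ≤ (x v).2 - 1 then true else false, (x v).2 - 1) := by
  have hc : conjNet G (fun j => (x j).1) v = false := by
    unfold conjNet
    rw [if_neg]
    intro H
    simp [H w h] at hw
  simp only [fmStep, hc]
  simp

/-- in a conjunctive network with firing memory on a connected
graph, if in a configuration every node with Boolean state `0` has delay `0`
and two adjacent nodes are both in Boolean state `0`, then the dynamics
converges to the all-zero fixed point. -/
theorem adjacent_zeros_converge {n : ℕ} (G : SimpleGraph (Fin n)) (hG : G.Connected)
    (dt : Fin n → ℕ) (hdt : ∀ i, 1 ≤ dt i) (y : Fin n → Bool × ℕ)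
    (hy : ∀ i, (y i).1 = false → (y i).2 = 0)
    (i j : Fin n) (hij : G.Adj i j)
    (hxi : (y i).1 = false) (hxj : (y j).1 = false) :
    ∃ T : ℕ, ∀ t : ℕ, T ≤ t → ∀ v : Fin n,
      ((fmStep G dt)^[t] y) v = ((false, 0) : Bool × ℕ) := by
  classical
  -- the two adjacent zero nodes stay at (false, 0) forever
  have pair : ∀ t, ((fmStep G dt)^[t] y) i = (false, 0) ∧ ((fmStep G dt)^[t] y) j = (false, 0) := by
    intro t
    induction t with
    | zero =>
      refine ⟨Prod.ext hxi (hy i hxi), Prod.ext hxj (hy j hxj)⟩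
    | succ t ih =>
      rw [Function.iterate_succ_apply']
      constructor
      · rw [fmStep_of_false_neighbor G dt _ hij (by rw [ih.2]), ih.1]
        simp
      · rw [fmStep_of_false_neighbor G dt _ hij.symm (by rw [ih.1]), ih.2]
        simp
  -- a node adjacent to an eventually-permanently-zero node is itself
  -- eventually permanently zero
  have spread : ∀ v w : Fin n, G.Adj v w →
      (∃ T, ∀ t, T ≤ t → ((fmStep G dt)^[t] y) w = (false, 0)) →
      (∃ T, ∀ t, T ≤ t → ((fmStep G dt)^[t] y) v = (false, 0)) := by
    rintro v w hvw ⟨T, hT⟩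
    set D := (((fmStep G dt)^[T] y) v).2 with hD
    have hdelay : ∀ s, (((fmStep G dt)^[T + s] y) v).2 ≤ D - s := by
      intro s
      induction s with
      | zero => rw [Nat.add_zero, Nat.sub_zero, hD]
      | succ s ih =>
        rw [show T + (s + 1) = (T + s) + 1 from rfl, Function.iterate_succ_apply',
          fmStep_of_false_neighbor G dt _ hvw
            (by rw [hT (T + s) (Nat.le_add_right _ _)])]
        dsimp only
        omega
    have hzero : ((fmStep G dt)^[T + D + 1] y) v = (false, 0) := by
      have h1 : (((fmStep G dt)^[T + D] y) v).2 = 0 := by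
        have := hdelay D; omega
      rw [Function.iterate_succ_apply', 
        fmStep_of_false_neighbor G dt _ hvw (by rw [hT (T + D) (Nat.le_add_right _ _)]),
        h1]
      simp
    refine ⟨T + D + 1, ?_⟩
    intro t ht
    induction t, ht using Nat.le_induction with
    | base => exact hzero
    | succ t ht ih =>
      rw [Function.iterate_succ_apply', 
        fmStep_of_false_neighbor G dt _ hvw (by rw [hT t (by omega)]), ih]
      simp
  have permi : ∃ T, ∀ t, T ≤ t → ((fmStep G dt)^[t] y) i = (false, 0) :=
    ⟨0, fun t _ => (pair t).1⟩
  have walkP : ∀ (a b : Fin n) (p : G.Walk a b),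
      (∃ T, ∀ t, T ≤ t → ((fmStep G dt)^[t] y) a = (false, 0)) →
      (∃ T, ∀ t, T ≤ t → ((fmStep G dt)^[t] y) b = (false, 0)) := by
    intro a b p
    induction p with
    | nil => exact id
    | cons h p ih => exact fun ha => ih (spread _ _ h.symm ha)
  have all : ∀ v, ∃ T, ∀ t, T ≤ t → ((fmStep G dt)^[t] y) v = (false, 0) := by
    intro v
    obtain ⟨p⟩ := hG.preconnected i v
    exact walkP i v p permi
  choose Tf hTf using all
  refine ⟨Finset.univ.sup Tf, fun t ht v => hTf v t ?_⟩
  exact le_trans (Finset.le_sup (Finset.mem_univ v)) ht
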